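/- Every y ∈ bv₀ lies in X and satisfies ‖y‖ ≤ ‖y‖₀, where ‖y‖ = ∑_{k=1}^∞ |y_{k+1}/(k+1) - y_k/k|; moreover the inclusion bv₀ ⊂ X is proper, witnessed by the constant sequence (1,1,1,...). -/

import Mathlib

open Filter Topology

open scoped ENNReal NNReal

private lemma tsum_abs_eq_toReal (f : ℕ → ℝ) :
    ∑' k, |f k| = (∑' k, (‖f k‖₊ : ℝ≥0∞)).toReal := by
  rw [ENNReal.tsum_toReal_eq (fun a => ENNReal.coe_ne_top)]
  simp [Real.norm_eq_abs]

private lemma summable_of_ennreal {f : ℕ → ℝ}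
    (h : (∑' k, (‖f k‖₊ : ℝ≥0∞)) ≠ ⊤) : Summable fun k => |f k| := by
  have h1 : Summable fun k => ‖f k‖₊ := ENNReal.tsum_coe_ne_top_iff_summable.1 h
  have := NNReal.summable_coe.2 h1
  simpa [Real.norm_eq_abs] using this

private lemma sum_w (m : ℕ) :
    ∑ k ∈ Finset.range (m + 1), (1 / (((k : ℝ) + 1) * ((k : ℝ) + 2)))
      = ((m : ℝ) + 1) / ((m : ℝ) + 2) := by
  induction m with
  | zero => norm_num
  | succ n ih =>
      rw [Finset.sum_range_succ, ih]
      push_cast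
      have h1 : (n : ℝ) + 2 ≠ 0 := by positivity
      have h2 : (n : ℝ) + 3 ≠ 0 := by positivity
      field_simp
      ring

private lemma tail_bound (y : ℕ → ℝ) (h0 : Tendsto y atTop (𝓝 0)) (k : ℕ) :
    (‖y k‖₊ : ℝ≥0∞) ≤ ∑' m : ℕ, (if k ≤ m then (‖y (m + 1) - y m‖₊ : ℝ≥0∞) else 0) := by
  set g : ℕ → ℝ≥0∞ := fun m => if k ≤ m then (‖y (m + 1) - y m‖₊ : ℝ≥0∞) else 0 with hg
  have htend : Tendsto (fun n => (‖y n‖₊ : ℝ≥0∞) + ∑ m ∈ Finset.range n, g m) atTop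
      (𝓝 (0 + ∑' m, g m)) := by
    refine Tendsto.add ?_ (ENNReal.tendsto_nat_tsum g)
    have : Tendsto (fun n => (‖y n‖₊ : ℝ≥0)) atTop (𝓝 0) := by
      simpa using h0.nnnorm
    simpa using (ENNReal.tendsto_coe.2 this)
  rw [← zero_add (∑' m, g m)]
  refine ge_of_tendsto htend ?_
  filter_upwards [eventually_ge_atTop k] with n hn
  -- real inequality
  have hreal : |y k| ≤ |y n| + ∑ m ∈ Finset.range n, (if k ≤ m then |y (m + 1) - y m| else 0) := by
    have hfil : (Finset.range n).filter (fun m => k ≤ m) = Finset.Ico k n := by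
      ext m
      simp only [Finset.mem_filter, Finset.mem_range, Finset.mem_Ico]
      omega
    have hsum : ∑ m ∈ Finset.range n, (if k ≤ m then |y (m + 1) - y m| else 0)
        = ∑ m ∈ Finset.Ico k n, |y (m + 1) - y m| := by
      rw [← hfil, Finset.sum_filter]
    have htel : ∑ m ∈ Finset.Ico k n, (y (m + 1) - y m) = y n - y k := by
      rw [Finset.sum_Ico_eq_sub _ hn, Finset.sum_range_sub, Finset.sum_range_sub]
      ring
    calc |y k| = |y n - (y n - y k)| := by ring_nf
      _ ≤ |y n| + |y n - y k| := abs_sub _ _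
      _ ≤ |y n| + ∑ m ∈ Finset.Ico k n, |y (m + 1) - y m| := by
          gcongr
          rw [← htel]
          exact Finset.abs_sum_le_sum_abs _ _
      _ = _ := by rw [hsum]
  -- cast
  calc (‖y k‖₊ : ℝ≥0∞) = ENNReal.ofReal |y k| := by
        rw [← Real.norm_eq_abs, ofReal_norm, enorm_eq_nnnorm]
    _ ≤ ENNReal.ofReal (|y n| + ∑ m ∈ Finset.range n, (if k ≤ m then |y (m + 1) - y m| else 0)) :=
        ENNReal.ofReal_le_ofReal hreal
    _ ≤ (‖y n‖₊ : ℝ≥0∞) + ∑ m ∈ Finset.range n, g m := by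
        rw [ENNReal.ofReal_add (abs_nonneg _) (by positivity),
          ENNReal.ofReal_sum_of_nonneg (fun i _ => by positivity)]
        gcongr
        · rw [← Real.norm_eq_abs, ofReal_norm, enorm_eq_nnnorm]
        · 
          rw [hg]
          simp only [apply_ite ENNReal.ofReal, ENNReal.ofReal_zero]
          split
          · rw [← Real.norm_eq_abs, ofReal_norm, enorm_eq_nnnorm]
          · exact le_rfl

private lemma key (y : ℕ → ℝ) (h0 : Tendsto y atTop (𝓝 0)) :
    ∑' k : ℕ, (‖y (k + 1) / ((k : ℝ) + 2) - y k / ((k : ℝ) + 1)‖₊ : ℝ≥0∞)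
      ≤ ∑' k : ℕ, (‖y (k + 1) - y k‖₊ : ℝ≥0∞) := by
  set D : ℕ → ℝ≥0∞ := fun m => (‖y (m + 1) - y m‖₊ : ℝ≥0∞) with hD
  set w : ℕ → ℝ≥0∞ := fun k => ENNReal.ofReal (1 / (((k : ℝ) + 1) * ((k : ℝ) + 2))) with hw
  set c : ℕ → ℝ≥0∞ := fun k => ENNReal.ofReal (1 / ((k : ℝ) + 2)) with hc
  -- termwise bound
  have hterm : ∀ k : ℕ,
      (‖y (k + 1) / ((k : ℝ) + 2) - y k / ((k : ℝ) + 1)‖₊ : ℝ≥0∞)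
        ≤ D k * c k + (‖y k‖₊ : ℝ≥0∞) * w k := by
    intro k
    have h1 : ((k : ℝ) + 1) ≠ 0 := by positivity
    have h2 : ((k : ℝ) + 2) ≠ 0 := by positivity
    have hreal : |y (k + 1) / ((k : ℝ) + 2) - y k / ((k : ℝ) + 1)|
        ≤ |y (k + 1) - y k| * (1 / ((k : ℝ) + 2))
          + |y k| * (1 / (((k : ℝ) + 1) * ((k : ℝ) + 2))) := by
      have e : y (k + 1) / ((k : ℝ) + 2) - y k / ((k : ℝ) + 1)
          = (y (k + 1) - y k) * (1 / ((k : ℝ) + 2))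
            - y k * (1 / (((k : ℝ) + 1) * ((k : ℝ) + 2))) := by
        field_simp
        ring
      rw [e]
      calc |(y (k + 1) - y k) * (1 / ((k : ℝ) + 2))
            - y k * (1 / (((k : ℝ) + 1) * ((k : ℝ) + 2)))|
          ≤ |(y (k + 1) - y k) * (1 / ((k : ℝ) + 2))|
            + |y k * (1 / (((k : ℝ) + 1) * ((k : ℝ) + 2)))| := abs_sub _ _
        _ = _ := by
            rw [abs_mul, abs_mul, abs_of_pos (by positivity : (0:ℝ) < 1 / ((k : ℝ) + 2)),
              abs_of_pos (by positivity : (0:ℝ) < 1 / (((k : ℝ) + 1) * ((k : ℝ) + 2)))]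
    calc (‖y (k + 1) / ((k : ℝ) + 2) - y k / ((k : ℝ) + 1)‖₊ : ℝ≥0∞)
        = ENNReal.ofReal |y (k + 1) / ((k : ℝ) + 2) - y k / ((k : ℝ) + 1)| := by
          rw [← Real.norm_eq_abs, ofReal_norm, enorm_eq_nnnorm]
      _ ≤ ENNReal.ofReal (|y (k + 1) - y k| * (1 / ((k : ℝ) + 2))
            + |y k| * (1 / (((k : ℝ) + 1) * ((k : ℝ) + 2)))) := ENNReal.ofReal_le_ofReal hreal
      _ = D k * c k + (‖y k‖₊ : ℝ≥0∞) * w k := by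
          rw [ENNReal.ofReal_add (by positivity) (by positivity),
            ENNReal.ofReal_mul (abs_nonneg _), ENNReal.ofReal_mul (abs_nonneg _)]
          congr 1 <;>
          · congr 1
            rw [← Real.norm_eq_abs, ofReal_norm, enorm_eq_nnnorm]
  -- middle sum bound
  have hmid : ∑' k : ℕ, (‖y k‖₊ : ℝ≥0∞) * w k
      ≤ ∑' m : ℕ, D m * ENNReal.ofReal (((m : ℝ) + 1) / ((m : ℝ) + 2)) := by
    calc ∑' k : ℕ, (‖y k‖₊ : ℝ≥0∞) * w k
        ≤ ∑' k : ℕ, (∑' m : ℕ, (if k ≤ m then D m else 0)) * w k := by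
          refine ENNReal.tsum_le_tsum (fun k => ?_)
          exact mul_le_mul_left (tail_bound y h0 k) _
      _ = ∑' k : ℕ, ∑' m : ℕ, (if k ≤ m then D m * w k else 0) := by
          refine tsum_congr (fun k => ?_)
          rw [ENNReal.tsum_mul_right.symm]
          exact tsum_congr (fun m => by rw [ite_mul, zero_mul])
      _ = ∑' m : ℕ, ∑' k : ℕ, (if k ≤ m then D m * w k else 0) := ENNReal.tsum_comm
      _ = ∑' m : ℕ, ∑ k ∈ Finset.range (m + 1), D m * w k := by
          refine tsum_congr (fun m => ?_)
          rw [tsum_eq_sum (s := Finset.range (m + 1)) (fun b hb => by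
            rw [if_neg]; simp only [Finset.mem_range] at hb; omega)]
          exact Finset.sum_congr rfl (fun k hk => by
            rw [if_pos (Nat.lt_succ_iff.1 (Finset.mem_range.1 hk))])
      _ = ∑' m : ℕ, D m * ENNReal.ofReal (((m : ℝ) + 1) / ((m : ℝ) + 2)) := by
          refine tsum_congr (fun m => ?_)
          rw [← Finset.mul_sum]
          congr 1
          rw [hw]
          rw [← ENNReal.ofReal_sum_of_nonneg (fun i _ => by positivity), sum_w]
  calc ∑' k : ℕ, (‖y (k + 1) / ((k : ℝ) + 2) - y k / ((k : ℝ) + 1)‖₊ : ℝ≥0∞)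
      ≤ ∑' k : ℕ, (D k * c k + (‖y k‖₊ : ℝ≥0∞) * w k) := ENNReal.tsum_le_tsum hterm
    _ = ∑' k : ℕ, D k * c k + ∑' k : ℕ, (‖y k‖₊ : ℝ≥0∞) * w k := ENNReal.tsum_add
    _ ≤ ∑' k : ℕ, D k * c k + ∑' m : ℕ, D m * ENNReal.ofReal (((m : ℝ) + 1) / ((m : ℝ) + 2)) := by
        gcongr
    _ = ∑' k : ℕ, (D k * c k + D k * ENNReal.ofReal (((k : ℝ) + 1) / ((k : ℝ) + 2))) :=
        ENNReal.tsum_add.symm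
    _ = ∑' k : ℕ, D k := by
        refine tsum_congr (fun k => ?_)
        rw [← mul_add, hc]
        rw [← ENNReal.ofReal_add (by positivity) (by positivity)]
        have : 1 / ((k : ℝ) + 2) + ((k : ℝ) + 1) / ((k : ℝ) + 2) = 1 := by
          have h2 : ((k : ℝ) + 2) ≠ 0 := by positivity
          field_simp
          ring
        rw [this]
        simp






/-- Membership in `X` (0-based: `x k` is the paper's `x_{k+1}`). -/
def MemX (x : ℕ → ℝ) : Prop :=
  Summable (fun k : ℕ => |x (k + 1) / ((k : ℝ) + 2) - x k / ((k : ℝ) + 1)|) ∧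
  Tendsto (fun k : ℕ => x k / ((k : ℝ) + 1)) atTop (𝓝 0)

/-- The norm of `X`. -/
noncomputable def normX (x : ℕ → ℝ) : ℝ :=
  ∑' k : ℕ, |x (k + 1) / ((k : ℝ) + 2) - x k / ((k : ℝ) + 1)|

/-- Membership in `bv₀`: null sequences of bounded variation. -/
def MemBV0 (y : ℕ → ℝ) : Prop :=
  Tendsto y atTop (𝓝 0) ∧ Summable (fun k : ℕ => |y (k + 1) - y k|)

/-- The norm of `bv₀`. -/
noncomputable def norm0 (y : ℕ → ℝ) : ℝ := ∑' k : ℕ, |y (k + 1) - y k|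

/-- Every `y ∈ bv₀` lies in `X` with `‖y‖ ≤ ‖y‖₀`; the inclusion is proper,
witnessed by the constant sequence `(1,1,1,…)`. -/
theorem stmt_6 :
    (∀ y : ℕ → ℝ, MemBV0 y → MemX y ∧ normX y ≤ norm0 y) ∧
    MemX (fun _ => 1) ∧ ¬ MemBV0 (fun _ => 1) := by
  refine ⟨?_, ?_, ?_⟩
  · rintro y ⟨h0, hs⟩
    have hD : (∑' k : ℕ, (‖y (k + 1) - y k‖₊ : ℝ≥0∞)) ≠ ⊤ := by
      rw [ENNReal.tsum_coe_ne_top_iff_summable]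
      exact NNReal.summable_coe.1 (by simpa [Real.norm_eq_abs] using hs)
    have hL := key y h0
    have hLne : (∑' k : ℕ, (‖y (k + 1) / ((k : ℝ) + 2) - y k / ((k : ℝ) + 1)‖₊ : ℝ≥0∞)) ≠ ⊤ :=
      ne_top_of_le_ne_top hD hL
    have hsum := summable_of_ennreal hLne
    refine ⟨⟨hsum, ?_⟩, ?_⟩
    · refine squeeze_zero_norm (fun k => ?_) (by simpa using h0.abs)
      rw [Real.norm_eq_abs, abs_div]
      rw [abs_of_pos (by positivity : (0:ℝ) < (k : ℝ) + 1)]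
      rw [div_le_iff₀ (by positivity)]
      nlinarith [abs_nonneg (y k)]
    · rw [normX, norm0, tsum_abs_eq_toReal, tsum_abs_eq_toReal]
      exact ENNReal.toReal_mono hD hL
  · have habs : ∀ k : ℕ, |(1:ℝ) / ((k : ℝ) + 2) - 1 / ((k : ℝ) + 1)|
        = 1 / ((k : ℝ) + 1) - 1 / ((k : ℝ) + 2) := by
      intro k
      rw [abs_sub_comm, abs_of_nonneg]
      rw [sub_nonneg]
      exact one_div_le_one_div_of_le (by positivity) (by linarith)
    have key1 : ∀ n : ℕ, ∑ k ∈ Finset.range n, |(1:ℝ) / ((k : ℝ) + 2) - 1 / ((k : ℝ) + 1)| ≤ 1 := by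
      intro n
      have e : ∑ k ∈ Finset.range n, |(1:ℝ) / ((k : ℝ) + 2) - 1 / ((k : ℝ) + 1)|
          = ∑ k ∈ Finset.range n, ((fun k : ℕ => 1 / ((k : ℝ) + 1)) k
              - (fun k : ℕ => 1 / ((k : ℝ) + 1)) (k + 1)) := by
        refine Finset.sum_congr rfl (fun k _ => ?_)
        rw [habs]
        push_cast
        ring
      rw [e, Finset.sum_range_sub']
      have h1 : (0:ℝ) ≤ 1 / ((n : ℝ) + 1) := by positivity
      norm_num
      linarith
    constructor
    · refine summable_of_sum_range_le (c := 1) (fun k => abs_nonneg _) (fun n => ?_)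
      simpa using key1 n
    · simpa [one_div] using tendsto_one_div_add_atTop_nhds_zero_nat (𝕜 := ℝ)
  · rintro ⟨h, -⟩
    have := tendsto_nhds_unique h tendsto_const_nhds
    norm_num at this
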